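/- For every integer m ≥ 1 and every real b, the polynomial T(τ) = Σ_{l=1}^{m} (b^{m−l}/(m−l)!)·τ^l satisfies the homogeneous equation −τ⁴T″(τ) + [(m−1)τ³ − bτ²]T′(τ) + bτT(τ) = 0 at every real τ. -/

import Mathlib

open Finset

lemma sum_pow_hasDerivAt (S : Finset ℕ) (a : ℕ → ℝ) (e : ℕ → ℕ) (τ : ℝ) :
    HasDerivAt (fun s : ℝ => ∑ l ∈ S, a l * s ^ e l)
      (∑ l ∈ S, a l * ((e l : ℝ) * τ ^ (e l - 1))) τ :=
  HasDerivAt.fun_sum fun l _ => (hasDerivAt_pow (e l) τ).const_mul (a l)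

theorem stmt_14 (m : ℕ) (hm : 1 ≤ m) (b : ℝ) (τ : ℝ) :
    -τ^4 * deriv (deriv (fun s : ℝ =>
        ∑ l ∈ Finset.Icc 1 m, b^(m-l) / ((m-l).factorial : ℝ) * s^l)) τ
      + (((m:ℝ)-1)*τ^3 - b*τ^2) * deriv (fun s : ℝ =>
          ∑ l ∈ Finset.Icc 1 m, b^(m-l) / ((m-l).factorial : ℝ) * s^l) τ
      + b*τ *
          (∑ l ∈ Finset.Icc 1 m, b^(m-l) / ((m-l).factorial : ℝ) * τ^l) = 0 := by
  set c : ℕ → ℝ := fun l => b^(m-l) / ((m-l).factorial : ℝ) with hc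
  have h1 : deriv (fun s : ℝ => ∑ l ∈ Icc 1 m, c l * s ^ l)
      = fun t : ℝ => ∑ l ∈ Icc 1 m, (c l * l) * t ^ (l - 1) := by
    funext t
    have hd := (sum_pow_hasDerivAt (Icc 1 m) c id t).deriv
    simp only [id_eq] at hd
    rw [hd]
    exact Finset.sum_congr rfl fun l _ => by ring
  have h2 : deriv (deriv (fun s : ℝ => ∑ l ∈ Icc 1 m, c l * s ^ l)) τ
      = ∑ l ∈ Icc 1 m, (c l * l) * ((↑(l-1) : ℝ) * τ ^ (l - 1 - 1)) := by
    rw [h1]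
    exact HasDerivAt.deriv (sum_pow_hasDerivAt (Icc 1 m) (fun l => c l * l) (fun l => l - 1) τ)
  have h1' : deriv (fun s : ℝ => ∑ l ∈ Icc 1 m, c l * s ^ l) τ
      = ∑ l ∈ Icc 1 m, (c l * l) * τ ^ (l - 1) := by rw [h1]
  rw [show (fun s : ℝ => ∑ l ∈ Finset.Icc 1 m, b^(m-l) / ((m-l).factorial : ℝ) * s^l)
      = fun s : ℝ => ∑ l ∈ Icc 1 m, c l * s ^ l from rfl, h2, h1']
  -- combine into one sum
  rw [Finset.mul_sum, Finset.mul_sum, Finset.mul_sum, ← Finset.sum_add_distrib,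
    ← Finset.sum_add_distrib]
  -- define A and B
  set A : ℕ → ℝ := fun l => (l : ℝ) * ((m : ℝ) - l) * c l * τ ^ (l + 2) with hA
  set B : ℕ → ℝ := fun l => b * ((l : ℝ) - 1) * c l * τ ^ (l + 1) with hB
  have hterm : ∀ l ∈ Icc 1 m,
      -τ^4 * ((c l * l) * ((↑(l-1) : ℝ) * τ ^ (l-1-1)))
      + (((m:ℝ)-1)*τ^3 - b*τ^2) * ((c l * l) * τ ^ (l-1))
      + b*τ * (b^(m-l) / ((m-l).factorial : ℝ) * τ^l) = A l - B l := by
    intro l hl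
    simp only [Finset.mem_Icc] at hl
    have hcl : b^(m-l) / ((m-l).factorial : ℝ) = c l := rfl
    rw [hcl]
    match l, hl.1 with
    | 1, _ => simp [hA, hB]; ring
    | (k+2), _ =>
      simp only [hA, hB, Nat.add_sub_cancel, Nat.succ_sub_one]
      push_cast
      ring
  rw [Finset.sum_congr rfl hterm, Finset.sum_sub_distrib]
  -- telescoping
  obtain ⟨n, rfl⟩ : ∃ n, m = n + 1 := ⟨m - 1, (Nat.succ_pred_eq_of_pos hm).symm⟩
  rw [← Finset.Ico_add_one_right_eq_Icc, Finset.sum_Ico_eq_sum_range, Finset.sum_Ico_eq_sum_range]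
  simp only [Nat.add_sub_cancel, show n + 1 + 1 - 1 = n + 1 from rfl]
  rw [Finset.sum_range_succ, Finset.sum_range_succ']
  have hAtop : A (1 + n) = 0 := by
    simp only [hA]
    push_cast; ring
  have hBbot : B (1 + 0) = 0 := by simp [hB]
  rw [hAtop, hBbot]
  have key : ∀ j ∈ Finset.range n, A (1 + j) = B (1 + (j + 1)) := by
    intro j hj
    simp only [Finset.mem_range] at hj
    obtain ⟨t, ht⟩ : ∃ t, n - j = t + 1 := ⟨n - j - 1, (Nat.succ_pred_eq_of_pos (by omega)).symm⟩
    have h1 : n + 1 - (1 + j) = t + 1 := by omega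
    have h2 : n + 1 - (1 + (j + 1)) = t := by omega
    simp only [hA, hB, hc, h1, h2]
    have hfac : ((t+1).factorial : ℝ) = (t+1) * (t.factorial : ℝ) := by
      push_cast [Nat.factorial_succ]; ring
    have hfne : (t.factorial : ℝ) ≠ 0 := Nat.cast_ne_zero.2 t.factorial_ne_zero
    have hn : n = j + t + 1 := by omega
    subst hn
    rw [hfac, pow_succ]
    push_cast
    field_simp
    ring
  rw [Finset.sum_congr rfl key]
  ring
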